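/- Let K be a field of characteristic not 2, ε ∈ K^× a non-square, and let the group C̃ = {R(a,b) : a,b ∈ K, a² - εb² ≠ 0} act on the 2-dimensional space V₁ with basis {y(y² - εz²), z(y² - εz²)} by the action in which R(a,b) sends y(y² - εz²) to (a² - εb²)(a·y(y² - εz²) + εb·z(y² - εz²)). Then V₁ decomposes into exactly the orbits of δ·y(y² - εz²) where δ ranges over {0} together with a set of representatives of K^×/(K^×)³; i.e., every element α·y(y² - εz²) + β·z(y² - εz²) lies in the orbit of δ·y(y² - εz²) for some such δ. -/

import Mathlib

/-- Let `K` be a field of characteristic ≠ 2, `ε ∈ K^×` a non-square,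
and let the group `C̃ = {R(a,b) : a² - εb² ≠ 0}` act on the 2-dimensional space `V₁`
with basis `{y(y²-εz²), z(y²-εz²)}`, where `R(a,b)` sends `y(y²-εz²)` to
`(a²-εb²)(a·y(y²-εz²) + εb·z(y²-εz²))`.  Then every element
`α·y(y²-εz²) + β·z(y²-εz²)` lies in the orbit of `δ·y(y²-εz²)` for some `δ` in
`{0}` together with a set of representatives of `K^×/(K^×)³`.
(In coordinates: `α = δ(a²-εb²)a` and `β = εδ(a²-εb²)b`.) -/
theorem orbits_in_V1_of_rotation_group
    {K : Type*} [Field K] (hch : ringChar K ≠ 2)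
    (ε : K) (hε : ε ≠ 0) (hsq : ¬∃ u : K, u ^ 2 = ε)
    -- `D` is `{0}` together with a set of representatives of `K^×/(K^×)³`
    (D : Set K) (hD0 : (0 : K) ∈ D)
    (hDrep : ∀ u : K, u ≠ 0 → ∃ δ ∈ D, δ ≠ 0 ∧ ∃ c : K, c ≠ 0 ∧ u = δ * c ^ 3)
    (α β : K) :
    ∃ δ ∈ D, ∃ a b : K, a ^ 2 - ε * b ^ 2 ≠ 0 ∧
      α = δ * (a ^ 2 - ε * b ^ 2) * a ∧ β = ε * δ * (a ^ 2 - ε * b ^ 2) * b := by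
  by_cases hβ : β = 0
  · by_cases hα : α = 0
    · exact ⟨0, hD0, 1, 0, by norm_num, by simp [hα], by simp [hβ]⟩
    · obtain ⟨δ, hδD, hδ0, c, hc, hu⟩ := hDrep α hα
      refine ⟨δ, hδD, c, 0, ?_, ?_, ?_⟩
      · simpa using pow_ne_zero 2 hc
      · rw [hu]; ring
      · simp [hβ]
  · set t := α / β with ht
    have hαt : α = t * β := by rw [ht, div_mul_cancel₀ α hβ]
    have hne : ε * t ^ 2 - 1 ≠ 0 := by
      intro h
      have ht0 : t ≠ 0 := by
        intro h0
        rw [h0] at h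
        simp at h
      exact hsq ⟨t⁻¹, by field_simp; linear_combination -h⟩
    have hu : β / (ε ^ 2 * (ε * t ^ 2 - 1)) ≠ 0 := by
      apply div_ne_zero hβ
      exact mul_ne_zero (pow_ne_zero 2 hε) hne
    obtain ⟨δ, hδD, hδ0, c, hc, hcu⟩ := hDrep _ hu
    refine ⟨δ, hδD, t * ε * c, c, ?_, ?_, ?_⟩
    · have : (t * ε * c) ^ 2 - ε * c ^ 2 = ε * c ^ 2 * (ε * t ^ 2 - 1) := by ring
      rw [this]
      exact mul_ne_zero (mul_ne_zero hε (pow_ne_zero 2 hc)) hne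
    · have hβeq : β = δ * c ^ 3 * (ε ^ 2 * (ε * t ^ 2 - 1)) := by
        field_simp at hcu
        linear_combination hcu
      rw [hαt, hβeq]; ring
    · have hβeq : β = δ * c ^ 3 * (ε ^ 2 * (ε * t ^ 2 - 1)) := by
        field_simp at hcu
        linear_combination hcu
      rw [hβeq]; ring
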